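/- Let α ≥ 0. Then Λ(L(α)) = H(α); that is: (a) for every f ∈ L(α), the function Λ(f) : (0,1] → [0,α] belongs to H(α); and (b) for every φ ∈ H(α) there exists f ∈ L(α) such that Λ(f) = φ. -/

import Mathlib

open Metric Set Filter
open scoped ENNReal NNReal

noncomputable section

/-- Least number of closed balls of radius `r` needed to cover `E`. -/
def coveringNumber {X : Type*} [MetricSpace X] (r : ℝ) (E : Set X) : ℕ∞ :=
  sInf {n : ℕ∞ | ∃ s : Finset X, (s.card : ℕ∞) = n ∧ E ⊆ ⋃ x ∈ s, Metric.closedBall x r}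

/-- Packing number: the largest cardinality of a subset of `E` whose closed `2r`-balls are
pairwise disjoint. -/
def packingNumber {X : Type*} [MetricSpace X] (r : ℝ) (E : Set X) : ℕ∞ :=
  sSup {n : ℕ∞ | ∃ s : Finset X, (s.card : ℕ∞) = n ∧ ↑s ⊆ E ∧
    (s : Set X).Pairwise fun x y =>
      Disjoint (Metric.closedBall x (2 * r)) (Metric.closedBall y (2 * r))}

/-- Base-2 logarithm `ℕ∞ → ℝ≥0∞`, clamped below at `0`. -/
def elog2 (n : ℕ∞) : ℝ≥0∞ :=
  if n = ⊤ then ⊤ else ENNReal.ofReal (Real.logb 2 (n.toNat : ℝ))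

/-- The infimal two-scale branching function `β_X(u,v) = log₂ inf_x P_{2^{-u}}(B(x,2^{-v}))`. -/
def brL (X : Type*) [MetricSpace X] (u v : ℝ) : ℝ≥0∞ :=
  elog2 (⨅ x : X, packingNumber ((2 : ℝ) ^ (-u)) (Metric.closedBall x ((2 : ℝ) ^ (-v))))

/-- The supremal two-scale branching function `ν_X(u,v) = log₂ sup_x N_{2^{-u}}(B(x,2^{-v}))`. -/
def brU (X : Type*) [MetricSpace X] (u v : ℝ) : ℝ≥0∞ :=
  elog2 (⨆ x : X, coveringNumber ((2 : ℝ) ^ (-u)) (Metric.closedBall x ((2 : ℝ) ^ (-v))))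

/-- The lower spectrum `dim_L^θ X`, valued in `[0,∞]`. -/
def lowerSpectrum (X : Type*) [MetricSpace X] (θ : ℝ) : ℝ≥0∞ :=
  ⨆ s ∈ {s : ℝ | 0 ≤ s ∧ ∃ C : ℝ, 0 < C ∧ ∀ r : ℝ, 0 < r → r < 1 → ∀ x : X,
      ENNReal.ofReal (C * (r ^ (θ - 1)) ^ s) ≤
        (coveringNumber r (Metric.closedBall x (r ^ θ)) : ℝ≥0∞)},
    ENNReal.ofReal s

/-- The monotone (quasi-) lower spectrum. -/
def monoLowerSpectrum (X : Type*) [MetricSpace X] (θ : ℝ) : ℝ≥0∞ :=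
  ⨆ s ∈ {s : ℝ | 0 ≤ s ∧ ∃ C : ℝ, 0 < C ∧ ∀ r R : ℝ, 0 < r → r ≤ r ^ θ → r ^ θ ≤ R → R < 1 →
      ∀ x : X, ENNReal.ofReal (C * (R / r) ^ s) ≤
        (coveringNumber r (Metric.closedBall x R) : ℝ≥0∞)},
    ENNReal.ofReal s

/-- The class `L(α)`: functions on `Δ = {v ≤ u}` that are nonnegative, vanish on the diagonal,
are superadditive, and are `α`-Lipschitz in the first variable. -/
def MemL (α : ℝ) (f : ℝ → ℝ → ℝ) : Prop :=
  (∀ u v : ℝ, v ≤ u → 0 ≤ f u v) ∧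
  (∀ u : ℝ, f u u = 0) ∧
  (∀ u w v : ℝ, v ≤ w → w ≤ u → f u w + f w v ≤ f u v) ∧
  (∀ v u₁ u₂ : ℝ, v ≤ u₁ → v ≤ u₂ → |f u₁ v - f u₂ v| ≤ α * |u₁ - u₂|)

/-- The class `H(α)`: functions `(0,1] → [0,α]` satisfying (S) and (W). -/
def MemH (α : ℝ) (φ : ℝ → ℝ) : Prop :=
  (∀ θ : ℝ, 0 < θ → θ ≤ 1 → 0 ≤ φ θ ∧ φ θ ≤ α) ∧
  (∀ lam θ : ℝ, 0 < lam → lam ≤ 1 → 0 < θ → θ ≤ 1 → φ θ + θ * φ lam ≤ φ (lam * θ)) ∧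
  (∀ lam θ : ℝ, 0 < lam → lam ≤ 1 → 0 < θ → θ ≤ 1 → φ (lam * θ) ≤ (1 - θ) * α + θ * φ lam)

/-- The class `M(α)`: functions `(0,1] → [0,α]` satisfying (W) and (M). -/
def MemM (α : ℝ) (φ : ℝ → ℝ) : Prop :=
  (∀ θ : ℝ, 0 < θ → θ ≤ 1 → 0 ≤ φ θ ∧ φ θ ≤ α) ∧
  (∀ lam θ : ℝ, 0 < lam → lam ≤ 1 → 0 < θ → θ ≤ 1 → φ (lam * θ) ≤ (1 - θ) * α + θ * φ lam) ∧
  (∀ θ₁ θ₂ : ℝ, 0 < θ₁ → θ₁ ≤ θ₂ → θ₂ < 1 → φ θ₂ / (1 - θ₂) ≤ φ θ₁ / (1 - θ₁))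

/-- The normalized limit `Λ(f)(θ) = liminf_{u→∞} f(u, θu)/u` for real-valued `f`. -/
def Lam (f : ℝ → ℝ → ℝ) (θ : ℝ) : ℝ :=
  Filter.liminf (fun u => f u (θ * u) / u) Filter.atTop

/-- The normalized limit `Λ(g)(θ) = liminf_{u→∞} g(u, θu)/u` for `[0,∞]`-valued `g`. -/
def LamE (g : ℝ → ℝ → ENNReal) (θ : ℝ) : ℝ≥0∞ :=
  Filter.liminf (fun u => g u (θ * u) / ENNReal.ofReal u) Filter.atTop

/-- The two-piece affine function `φ_{α,λ,t}` through `(0,α)`, `(λ,t)` and `(1,0)`. -/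
def phiFun (α lam t : ℝ) : ℝ → ℝ := fun θ =>
  if θ ≤ lam then α + (θ / lam) * (t - α) else t * (1 - θ) / (1 - lam)

/-- The maximal element `h_{g,z}` of `L(α)` agreeing with `g` on the strip `{(u,z) : u ≥ z}`. -/
def hFun (α : ℝ) (g : ℝ → ℝ) (z : ℝ) : ℝ → ℝ → ℝ := fun u v =>
  if z ≤ v then g u - g v else α * (u - v)

/-- A metric space is `η`-uniform if `η(u)/u → 0` and `ν_X ≤ β_X + η(u)` on `Δ`. -/
def IsEtaUniform (η : ℝ → ℝ) (X : Type*) [MetricSpace X] : Prop :=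
  Filter.Tendsto (fun u => η u / u) Filter.atTop (nhds 0) ∧
  ∀ u v : ℝ, v ≤ u → brU X u v ≤ brL X u v + ENNReal.ofReal (η u)

/-- A metric space is uniform if it is `η`-uniform for some `η`. -/
def IsUniform (X : Type*) [MetricSpace X] : Prop := ∃ η : ℝ → ℝ, IsEtaUniform η X

/-- The relation `f ≍ g` between a real-valued and an `[0,∞]`-valued function on `Δ`. -/
def AsympRE (f : ℝ → ℝ → ℝ) (g : ℝ → ℝ → ENNReal) : Prop :=
  ∃ η : ℝ → ℝ, (∀ u : ℝ, 0 ≤ η u) ∧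
    Filter.Tendsto (fun u => η u / u) Filter.atTop (nhds 0) ∧
    ∀ u v : ℝ, 0 ≤ v → v ≤ u →
      (v ≤ u - η u → ENNReal.ofReal (f u (v + η u) - η u) ≤ g u v) ∧
      (η u ≤ v → g u v ≤ ENNReal.ofReal (f u (v - η u) + η u))


private lemma liminf_comp_const_mul (θ : ℝ) (hθ : 0 < θ) (g : ℝ → ℝ) :
    Filter.liminf (fun u => g (θ * u)) Filter.atTop = Filter.liminf g Filter.atTop := by
  have h1 : Filter.map (fun u : ℝ => θ * u) atTop = atTop := by
    have h := (OrderIso.mulLeft₀ θ hθ).map_atTop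
    have he : ⇑(OrderIso.mulLeft₀ θ hθ) = fun u : ℝ => θ * u := by
      ext x; simp [OrderIso.mulLeft₀]; rfl
    rwa [he] at h
  conv_rhs => rw [← h1]
  rw [Filter.liminf, Filter.liminf, Filter.map_map]
  rfl

private lemma liminf_affine (c d : ℝ) (hd : 0 < d) (g : ℝ → ℝ)
    (cobdd : Filter.IsCoboundedUnder (· ≥ ·) Filter.atTop g)
    (bdd : Filter.IsBoundedUnder (· ≥ ·) Filter.atTop g) :
    Filter.liminf (fun u => c + d * g u) Filter.atTop
      = c + d * Filter.liminf g Filter.atTop := by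
  have hmono : Monotone (fun x : ℝ => c + d * x) := by
    intro x y hxy; dsimp; nlinarith
  have hcont : ContinuousAt (fun x : ℝ => c + d * x) (Filter.liminf g Filter.atTop) :=
    (continuous_const.add (continuous_const.mul continuous_id)).continuousAt
  exact (hmono.map_liminf_of_continuousAt g hcont cobdd bdd).symm

/-- `Λ(L(α)) = H(α)`. -/
theorem Lam_image_of_L (α : ℝ) (hα : 0 ≤ α) :
    (∀ f : ℝ → ℝ → ℝ, MemL α f → MemH α (Lam f)) ∧
    (∀ φ : ℝ → ℝ, MemH α φ →
      ∃ f : ℝ → ℝ → ℝ, MemL α f ∧ ∀ θ : ℝ, 0 < θ → θ ≤ 1 → Lam f θ = φ θ) := by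
  constructor
  · -- part (a)
    rintro f ⟨hpos, hdiag, hsuper, hlip⟩
    -- basic bounds on the quotient
    have key : ∀ θ : ℝ, 0 < θ → θ ≤ 1 → ∀ u : ℝ, 1 ≤ u →
        0 ≤ f u (θ * u) / u ∧ f u (θ * u) / u ≤ α * (1 - θ) := by
      intro θ hθ0 hθ1 u hu
      have hu0 : (0 : ℝ) < u := by linarith
      have hv : θ * u ≤ u := by nlinarith
      have h0 : 0 ≤ f u (θ * u) := hpos u (θ * u) hv
      have hl := hlip (θ * u) u (θ * u) hv le_rfl
      rw [hdiag, sub_zero] at hl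
      have habs : |f u (θ * u)| = f u (θ * u) := abs_of_nonneg h0
      have habs2 : |u - θ * u| = u - θ * u := abs_of_nonneg (by linarith)
      rw [habs, habs2] at hl
      refine ⟨div_nonneg h0 hu0.le, ?_⟩
      rw [div_le_iff₀ hu0]
      nlinarith
    have hEv : ∀ θ : ℝ, 0 < θ → θ ≤ 1 → ∀ᶠ u in atTop,
        0 ≤ f u (θ * u) / u ∧ f u (θ * u) / u ≤ α * (1 - θ) := by
      intro θ h1 h2
      exact eventually_atTop.2 ⟨1, key θ h1 h2⟩
    have hbdd_ge : ∀ θ : ℝ, 0 < θ → θ ≤ 1 →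
        Filter.IsBoundedUnder (· ≥ ·) atTop (fun u => f u (θ * u) / u) := by
      intro θ h1 h2
      exact isBoundedUnder_of_eventually_ge ((hEv θ h1 h2).mono fun u h => h.1)
    have hbdd_le : ∀ θ : ℝ, 0 < θ → θ ≤ 1 →
        Filter.IsBoundedUnder (· ≤ ·) atTop (fun u => f u (θ * u) / u) := by
      intro θ h1 h2
      exact isBoundedUnder_of_eventually_le ((hEv θ h1 h2).mono fun u h => h.2)
    have hcob : ∀ θ : ℝ, 0 < θ → θ ≤ 1 →
        Filter.IsCoboundedUnder (· ≥ ·) atTop (fun u => f u (θ * u) / u) := by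
      intro θ h1 h2
      exact isCoboundedUnder_ge_of_eventually_le atTop ((hEv θ h1 h2).mono fun u h => h.2)
    -- eventual bounds for composed function
    have hEvComp : ∀ lam θ : ℝ, 0 < lam → lam ≤ 1 → 0 < θ → ∀ᶠ u in atTop,
        0 ≤ f (θ * u) (lam * (θ * u)) / (θ * u) ∧
          f (θ * u) (lam * (θ * u)) / (θ * u) ≤ α * (1 - lam) := by
      intro lam θ hl0 hl1 hθ0
      have ht : Tendsto (fun u : ℝ => θ * u) atTop atTop :=
        Tendsto.const_mul_atTop hθ0 tendsto_id
      filter_upwards [ht.eventually_ge_atTop 1] with u hu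
      exact key lam hl0 hl1 (θ * u) hu
    refine ⟨fun θ hθ0 hθ1 => ⟨?_, ?_⟩, ?_, ?_⟩
    · exact Filter.le_liminf_of_le (hcob θ hθ0 hθ1) ((hEv θ hθ0 hθ1).mono fun u h => h.1)
    · refine Filter.liminf_le_of_le (hbdd_ge θ hθ0 hθ1) (fun b hb => ?_)
      obtain ⟨u, h1, h2, h3⟩ := (hb.and (hEv θ hθ0 hθ1)).exists
      nlinarith
    · -- (S)
      intro lam θ hl0 hl1 hθ0 hθ1
      have hlt0 : 0 < lam * θ := mul_pos hl0 hθ0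
      have hlt1 : lam * θ ≤ 1 := by nlinarith
      set B : ℝ → ℝ := fun u => θ * (f (θ * u) (lam * (θ * u)) / (θ * u)) with hBdef
      have hBlim : Filter.liminf B atTop = θ * Lam f lam := by
        have e1 := liminf_comp_const_mul θ hθ0 (fun w => θ * (f w (lam * w) / w))
        have e2 := liminf_affine 0 θ hθ0 (fun w => f w (lam * w) / w)
          (hcob lam hl0 hl1) (hbdd_ge lam hl0 hl1)
        simp only [zero_add] at e2
        calc Filter.liminf B atTop
            = Filter.liminf (fun w => θ * (f w (lam * w) / w)) atTop := e1
          _ = θ * Filter.liminf (fun w => f w (lam * w) / w) atTop := e2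
          _ = θ * Lam f lam := rfl
      have hBbd : ∀ᶠ u in atTop, 0 ≤ B u ∧ B u ≤ θ * (α * (1 - lam)) := by
        filter_upwards [hEvComp lam θ hl0 hl1 hθ0] with u hu
        exact ⟨mul_nonneg hθ0.le hu.1, mul_le_mul_of_nonneg_left hu.2 hθ0.le⟩
      have hBbdd_ge : Filter.IsBoundedUnder (· ≥ ·) atTop B :=
        isBoundedUnder_of_eventually_ge (hBbd.mono fun u h => h.1)
      have hsum : ∀ᶠ u in atTop, f u (θ * u) / u + B u ≤ f u (lam * θ * u) / u := by
        filter_upwards [eventually_ge_atTop 1] with u hu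
        have hu0 : (0 : ℝ) < u := by linarith
        have hθu : (0 : ℝ) < θ * u := mul_pos hθ0 hu0
        have h1 : lam * θ * u ≤ θ * u := by nlinarith
        have h2 : θ * u ≤ u := by nlinarith
        have hs := hsuper u (θ * u) (lam * θ * u) (by linarith) h2
        have hBu : B u = f (θ * u) (lam * θ * u) / u := by
          simp only [hBdef]
          rw [show lam * (θ * u) = lam * θ * u by ring]
          field_simp
        rw [hBu, ← add_div, div_le_div_iff₀ hu0 hu0]
        nlinarith
      -- conclude via epsilon argument
      by_contra hcon
      push_neg at hcon
      set ε : ℝ := (Lam f θ + θ * Lam f lam - Lam f (lam * θ)) / 2 with hεdef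
      have hε : 0 < ε := by simp only [hεdef]; linarith
      have h1 : ∀ᶠ u in atTop, Lam f θ - ε / 2 < f u (θ * u) / u := by
        have : Lam f θ - ε / 2 < Filter.liminf (fun u => f u (θ * u) / u) atTop := by
          have : Lam f θ = Filter.liminf (fun u => f u (θ * u) / u) atTop := rfl
          linarith
        exact eventually_lt_of_lt_liminf this (hbdd_ge θ hθ0 hθ1)
      have h2 : ∀ᶠ u in atTop, θ * Lam f lam - ε / 2 < B u := by
        have : θ * Lam f lam - ε / 2 < Filter.liminf B atTop := by
          rw [hBlim]; linarith
        exact eventually_lt_of_lt_liminf this hBbdd_ge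
      have h3 : Lam f θ + θ * Lam f lam - ε ≤ Lam f (lam * θ) := by
        refine Filter.le_liminf_of_le (hcob (lam * θ) hlt0 hlt1) ?_
        filter_upwards [h1, h2, hsum] with u hu1 hu2 hu3
        linarith
      simp only [hεdef] at h3
      linarith
    · -- (W)
      intro lam θ hl0 hl1 hθ0 hθ1
      have hlt0 : 0 < lam * θ := mul_pos hl0 hθ0
      have hlt1 : lam * θ ≤ 1 := by nlinarith
      set D : ℝ → ℝ := fun u => α * (1 - θ) + θ * (f (θ * u) (lam * (θ * u)) / (θ * u))
        with hDdef
      have hDlim : Filter.liminf D atTop = α * (1 - θ) + θ * Lam f lam := by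
        have e1 := liminf_comp_const_mul θ hθ0
          (fun w => α * (1 - θ) + θ * (f w (lam * w) / w))
        have e2 := liminf_affine (α * (1 - θ)) θ hθ0 (fun w => f w (lam * w) / w)
          (hcob lam hl0 hl1) (hbdd_ge lam hl0 hl1)
        calc Filter.liminf D atTop
            = Filter.liminf (fun w => α * (1 - θ) + θ * (f w (lam * w) / w)) atTop := e1
          _ = α * (1 - θ) + θ * Filter.liminf (fun w => f w (lam * w) / w) atTop := e2
          _ = α * (1 - θ) + θ * Lam f lam := rfl
      have hDcob : Filter.IsCoboundedUnder (· ≥ ·) atTop D := by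
        refine isCoboundedUnder_ge_of_eventually_le atTop
          (x := α * (1 - θ) + θ * (α * (1 - lam))) ?_
        filter_upwards [hEvComp lam θ hl0 hl1 hθ0] with u hu
        have := mul_le_mul_of_nonneg_left hu.2 hθ0.le
        simp only [hDdef]
        linarith
      have hpw : ∀ᶠ u in atTop, f u (lam * θ * u) / u ≤ D u := by
        filter_upwards [eventually_ge_atTop 1] with u hu
        have hu0 : (0 : ℝ) < u := by linarith
        have hθu : (0 : ℝ) < θ * u := mul_pos hθ0 hu0
        have h1 : lam * θ * u ≤ θ * u := by nlinarith
        have h2 : θ * u ≤ u := by nlinarith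
        have hl := hlip (lam * θ * u) u (θ * u) (by linarith) h1
        have hnn := hpos (θ * u) (lam * θ * u) h1
        have habs2 : |u - θ * u| = u - θ * u := abs_of_nonneg (by linarith)
        rw [habs2] at hl
        have hl' : f u (lam * θ * u) ≤ f (θ * u) (lam * θ * u) + α * (u - θ * u) := by
          have := abs_le.1 hl
          linarith [this.2]
        have hDu : D u = α * (1 - θ) + f (θ * u) (lam * θ * u) / u := by
          simp only [hDdef]
          have h3 : lam * (θ * u) = lam * θ * u := by ring
          rw [h3]
          have h4 : θ * (f (θ * u) (lam * θ * u) / (θ * u)) = f (θ * u) (lam * θ * u) / u := by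
            field_simp
          rw [h4]
        rw [hDu, div_le_iff₀ hu0]
        have hfd : f (θ * u) (lam * θ * u) / u * u = f (θ * u) (lam * θ * u) := by
          field_simp
        nlinarith [hfd]
      have hmain : Lam f (lam * θ) ≤ Filter.liminf D atTop :=
        Filter.liminf_le_liminf hpw (hbdd_ge (lam * θ) hlt0 hlt1) hDcob
      rw [hDlim] at hmain
      linarith
  · -- part (b)
    rintro φ ⟨hbd, hS, hW⟩
    have hφ1 : φ 1 = 0 := by
      have h := hS 1 1 one_pos le_rfl one_pos le_rfl
      have h2 := (hbd 1 one_pos le_rfl).1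
      simp only [one_mul, mul_one] at h
      linarith
    have hub : ∀ θ : ℝ, 0 < θ → θ ≤ 1 → φ θ ≤ (1 - θ) * α := by
      intro θ h1 h2
      have h := hW 1 θ one_pos le_rfl h1 h2
      rw [one_mul, hφ1] at h
      linarith
    refine ⟨fun u v => if 0 < v then u * φ (v / u) else α * (u - v), ⟨?_, ?_, ?_, ?_⟩, ?_⟩
    · -- nonneg
      intro u v huv
      dsimp only
      by_cases h : 0 < v
      · have hu : 0 < u := lt_of_lt_of_le h huv
        rw [if_pos h]
        exact mul_nonneg hu.le (hbd (v / u) (div_pos h hu) ((div_le_one hu).2 huv)).1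
      · rw [if_neg h]
        push_neg at h
        have : 0 ≤ u - v := by linarith
        exact mul_nonneg hα this
    · -- diagonal
      intro u
      dsimp only
      by_cases h : 0 < u
      · rw [if_pos h, div_self (ne_of_gt h), hφ1, mul_zero]
      · rw [if_neg h, sub_self, mul_zero]
    · -- superadditivity
      intro u w v hvw hwu
      dsimp only
      by_cases hv : 0 < v
      · have hw : 0 < w := lt_of_lt_of_le hv hvw
        have hu : 0 < u := lt_of_lt_of_le hw hwu
        rw [if_pos hv, if_pos hv, if_pos hw]
        have hs := hS (v / w) (w / u) (div_pos hv hw) ((div_le_one hw).2 hvw)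
          (div_pos hw hu) ((div_le_one hu).2 hwu)
        have he : v / w * (w / u) = v / u := by field_simp
        rw [he] at hs
        have h2 := mul_le_mul_of_nonneg_left hs hu.le
        have h3 : u * (φ (w / u) + w / u * φ (v / w)) = u * φ (w / u) + w * φ (v / w) := by
          field_simp
        linarith [h3 ▸ h2]
      · by_cases hw : 0 < w
        · have hu : 0 < u := lt_of_lt_of_le hw hwu
          rw [if_neg hv, if_neg hv, if_pos hw]
          have h := hub (w / u) (div_pos hw hu) ((div_le_one hu).2 hwu)
          have h2 := mul_le_mul_of_nonneg_left h hu.le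
          have h3 : u * ((1 - w / u) * α) = (u - w) * α := by
            field_simp
          rw [h3] at h2
          nlinarith
        · rw [if_neg hv, if_neg hv, if_neg hw]
          have : α * (u - w) + α * (w - v) = α * (u - v) := by ring
          linarith
    · -- Lipschitz
      intro v u₁ u₂ h1 h2
      dsimp only
      by_cases hv : 0 < v
      · have key2 : ∀ a b : ℝ, v ≤ a → a ≤ b →
            a * φ (v / a) ≤ b * φ (v / b) ∧
              b * φ (v / b) ≤ a * φ (v / a) + α * (b - a) := by
          intro a b hva hab
          have ha : 0 < a := lt_of_lt_of_le hv hva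
          have hb : 0 < b := lt_of_lt_of_le ha hab
          have hva' : v / a ≤ 1 := (div_le_one ha).2 hva
          have hab' : a / b ≤ 1 := (div_le_one hb).2 hab
          have he : v / a * (a / b) = v / b := by field_simp
          constructor
          · have hs := hS (v / a) (a / b) (div_pos hv ha) hva' (div_pos ha hb) hab'
            rw [he] at hs
            have hnn := (hbd (a / b) (div_pos ha hb) hab').1
            have h2 := mul_le_mul_of_nonneg_left hs hb.le
            have h3 : b * (φ (a / b) + a / b * φ (v / a))
                = b * φ (a / b) + a * φ (v / a) := by
              field_simp
            nlinarith
          · have hw := hW (v / a) (a / b) (div_pos hv ha) hva' (div_pos ha hb) hab'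
            rw [he] at hw
            have h2 := mul_le_mul_of_nonneg_left hw hb.le
            have h3 : b * ((1 - a / b) * α + a / b * φ (v / a))
                = (b - a) * α + a * φ (v / a) := by
              field_simp
            rw [h3] at h2
            linarith
        rw [if_pos hv, if_pos hv]
        rcases le_total u₁ u₂ with hle | hle
        · obtain ⟨ka, kb⟩ := key2 u₁ u₂ h1 hle
          have habs : |u₁ - u₂| = u₂ - u₁ := by
            rw [abs_of_nonpos (by linarith)]; ring
          rw [habs, abs_le]
          constructor <;> nlinarith
        · obtain ⟨ka, kb⟩ := key2 u₂ u₁ h2 hle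
          have habs : |u₁ - u₂| = u₁ - u₂ := abs_of_nonneg (by linarith)
          rw [habs, abs_le]
          constructor <;> nlinarith
      · rw [if_neg hv, if_neg hv]
        have he : α * (u₁ - v) - α * (u₂ - v) = α * (u₁ - u₂) := by ring
        rw [he, abs_mul, abs_of_nonneg hα]
    · -- Lam f = φ on (0,1]
      intro θ hθ0 hθ1
      have hev : ∀ᶠ u in atTop,
          (if 0 < θ * u then u * φ (θ * u / u) else α * (u - θ * u)) / u = φ θ := by
        filter_upwards [eventually_ge_atTop 1] with u hu
        have hu0 : (0 : ℝ) < u := by linarith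
        have hp : 0 < θ * u := mul_pos hθ0 hu0
        rw [if_pos hp]
        have h1 : θ * u / u = θ := by field_simp
        rw [h1, mul_comm, mul_div_assoc, div_self (ne_of_gt hu0), mul_one]
      calc Lam (fun u v => if 0 < v then u * φ (v / u) else α * (u - v)) θ
          = Filter.liminf (fun u =>
              (if 0 < θ * u then u * φ (θ * u / u) else α * (u - θ * u)) / u) atTop := rfl
        _ = Filter.liminf (fun _ => φ θ) atTop := Filter.liminf_congr hev
        _ = φ θ := Filter.liminf_const _

end
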